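/- Suppose there exists λ̂ ≥ 0 with A + λ̂B ≻ 0, and suppose x* is an optimal solution of minimizing q(x) = xᵀAx + 2aᵀx subject to g(x) = xᵀBx + 2bᵀx + β ≤ 0. If A is not positive definite, or A is positive definite and g(-A⁻¹a) ≥ 0, then there exists an optimal solution on the boundary, i.e., with g(x*) = 0. Conversely, if A ≻ 0 and g(-A⁻¹a) < 0, the problem has no optimal solution on the boundary. -/

import Mathlib

open Matrix

lemma symmdot {n : ℕ} {M : Matrix (Fin n) (Fin n) ℝ} (hM : M.IsSymm)
    (x y : Fin n → ℝ) : x ⬝ᵥ M *ᵥ y = y ⬝ᵥ M *ᵥ x := by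
  rw [Matrix.dotProduct_mulVec, ← Matrix.mulVec_transpose, hM, dotProduct_comm]

lemma expnd {n : ℕ} {M : Matrix (Fin n) (Fin n) ℝ} (hM : M.IsSymm)
    (x v : Fin n → ℝ) (t : ℝ) :
    (x + t • v) ⬝ᵥ M *ᵥ (x + t • v)
      = x ⬝ᵥ M *ᵥ x + 2*t*(v ⬝ᵥ M *ᵥ x) + t^2*(v ⬝ᵥ M *ᵥ v) := by
  rw [Matrix.mulVec_add, Matrix.mulVec_smul, dotProduct_add, add_dotProduct, add_dotProduct,
    dotProduct_smul, dotProduct_smul, smul_dotProduct, smul_dotProduct, symmdot hM x v]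
  simp [smul_eq_mul]; ring

lemma herm_of_symm {n : ℕ} {M : Matrix (Fin n) (Fin n) ℝ} (hM : M.IsSymm) : M.IsHermitian := by
  unfold Matrix.IsHermitian
  ext i j
  simpa using congrFun (congrFun hM i) j

lemma aux_small {c e G : ℝ} (hG : G < 0) :
    ∃ δ > 0, ∀ t : ℝ, |t| ≤ δ → G + (2*t*c + t^2*e) ≤ 0 := by
  refine ⟨min 1 (-G/(2*|c|+|e|+1)), lt_min one_pos (div_pos (by linarith) (by positivity)), ?_⟩
  intro t ht
  have h1 : |t| ≤ 1 := le_trans ht (min_le_left _ _)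
  have h2 : |t| ≤ -G/(2*|c|+|e|+1) := le_trans ht (min_le_right _ _)
  have h3 : |t| * (2*|c|+|e|+1) ≤ -G := by
    rw [← le_div_iff₀ (by positivity)]; exact h2
  have h4 : t*c ≤ |t| * |c| := le_trans (le_abs_self _) (by rw [abs_mul])
  have h5 : t^2*e ≤ |t| * |e| := by
    have : t^2 ≤ |t| := by nlinarith [sq_abs t, abs_nonneg t]
    nlinarith [le_abs_self e, abs_nonneg e, sq_nonneg t]
  nlinarith [abs_nonneg t]

lemma aux_stat {α γ δ : ℝ} (hδ : 0 < δ) (H : ∀ t : ℝ, |t| ≤ δ → 0 ≤ t^2*α + 2*t*γ) :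
    γ = 0 ∧ 0 ≤ α := by
  have hγ : γ = 0 := by
    by_contra hne
    have hγpos : 0 < |γ| := abs_pos.mpr hne
    set s := min δ (|γ|/(|α|+1)) with hs
    have hs0 : 0 < s := lt_min hδ (by positivity)
    have hsδ : |s| ≤ δ := by rw [abs_of_pos hs0]; exact min_le_left _ _
    have hsδ' : |(-s)| ≤ δ := by rw [abs_neg]; exact hsδ
    have h1 := H s hsδ
    have h2 := H (-s) hsδ'
    have hsle : s ≤ |γ|/(|α|+1) := min_le_right _ _
    have h3 : s*(|α|+1) ≤ |γ| := by rw [← le_div_iff₀ (by positivity)]; exact hsle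
    have h4 : s*α ≤ s*|α| := by nlinarith [le_abs_self α, hs0.le]
    have h5 : 2*|γ| ≤ s*α := by
      rcases abs_cases γ with ⟨h,_⟩ | ⟨h,_⟩ <;> rw [h] <;> nlinarith [sq_nonneg s]
    nlinarith
  subst hγ
  refine ⟨rfl, ?_⟩
  have := H δ (by rw [abs_of_pos hδ])
  nlinarith [mul_pos hδ hδ]

theorem stmt1 {n : ℕ} (A B : Matrix (Fin n) (Fin n) ℝ) (a b : Fin n → ℝ) (β : ℝ)
    (hA : A.IsSymm) (hB : B.IsSymm)
    (hl : ∃ l : ℝ, 0 ≤ l ∧ (A + l • B).PosDef)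
    (q : (Fin n → ℝ) → ℝ) (hq : ∀ x, q x = x ⬝ᵥ A.mulVec x + 2 * (a ⬝ᵥ x))
    (g : (Fin n → ℝ) → ℝ) (hg : ∀ x, g x = x ⬝ᵥ B.mulVec x + 2 * (b ⬝ᵥ x) + β)
    (slater : ∃ x, g x < 0)
    (xs : Fin n → ℝ) (hfeas : g xs ≤ 0) (hopt : ∀ x, g x ≤ 0 → q xs ≤ q x) :
    ((¬ A.PosDef ∨ (A.PosDef ∧ 0 ≤ g (-(A⁻¹.mulVec a)))) →
      ∃ y, g y = 0 ∧ ∀ x, g x ≤ 0 → q y ≤ q x) ∧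
    ((A.PosDef ∧ g (-(A⁻¹.mulVec a)) < 0) →
      ¬ ∃ y, g y = 0 ∧ ∀ x, g x ≤ 0 → q y ≤ q x) := by
  have hgexp : ∀ (x w : Fin n → ℝ) (t : ℝ),
      g (x + t • w) = g x + (2*t*(w ⬝ᵥ B *ᵥ x + w ⬝ᵥ b) + t^2*(w ⬝ᵥ B *ᵥ w)) := by
    intro x w t
    rw [hg, hg, expnd hB, dotProduct_add, dotProduct_smul, smul_eq_mul, dotProduct_comm b w]
    ring
  have hqexp : ∀ (x w : Fin n → ℝ) (t : ℝ),
      q (x + t • w) = q x + (2*t*(w ⬝ᵥ A *ᵥ x + w ⬝ᵥ a) + t^2*(w ⬝ᵥ A *ᵥ w)) := by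
    intro x w t
    rw [hq, hq, expnd hA, dotProduct_add, dotProduct_smul, smul_eq_mul, dotProduct_comm a w]
    ring
  constructor
  · intro hcase
    by_cases hzero : g xs = 0
    · exact ⟨xs, hzero, hopt⟩
    have hneg : g xs < 0 := lt_of_le_of_ne hfeas hzero
    -- first/second order conditions at the interior point xs
    have key : ∀ d : Fin n → ℝ, (d ⬝ᵥ A *ᵥ xs + d ⬝ᵥ a) = 0 ∧ 0 ≤ d ⬝ᵥ A *ᵥ d := by
      intro d
      obtain ⟨δ, hδ, hsm⟩ :=
        aux_small (c := d ⬝ᵥ B *ᵥ xs + d ⬝ᵥ b) (e := d ⬝ᵥ B *ᵥ d) hneg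
      apply aux_stat hδ
      intro t ht
      have hgfeas : g (xs + t • d) ≤ 0 := by
        rw [hgexp]; exact hsm t ht
      have := hopt _ hgfeas
      rw [hqexp] at this
      linarith
    have stat : A *ᵥ xs + a = 0 := by
      have h := (key (A *ᵥ xs + a)).1
      rw [← dotProduct_add] at h
      exact dotProduct_self_eq_zero.mp h
    rcases hcase with hnpd | ⟨hpd, hge⟩
    · -- A not positive definite : move along a null direction
      have hherm := herm_of_symm hA
      have hex : ∃ v, v ≠ 0 ∧ v ⬝ᵥ A *ᵥ v ≤ 0 := by
        by_contra hc
        push_neg at hc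
        exact hnpd (Matrix.PosDef.of_dotProduct_mulVec_pos hherm fun x hx => by simpa using hc x hx)
      obtain ⟨v, hv0, hvA⟩ := hex
      have hvA0 : v ⬝ᵥ A *ᵥ v = 0 := le_antisymm hvA (key v).2
      obtain ⟨l, hl0, hlpd⟩ := hl
      have hvB : 0 < v ⬝ᵥ B *ᵥ v := by
        have h1 : 0 < v ⬝ᵥ (A + l • B) *ᵥ v := by simpa using hlpd.dotProduct_mulVec_pos hv0
        rw [Matrix.add_mulVec, Matrix.smul_mulVec, dotProduct_add, dotProduct_smul,
          smul_eq_mul, hvA0] at h1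
        by_contra hcon
        push_neg at hcon
        nlinarith [mul_nonneg hl0 (neg_nonneg.mpr hcon)]
      set c := v ⬝ᵥ B *ᵥ xs + v ⬝ᵥ b with hc
      set e := v ⬝ᵥ B *ᵥ v with he
      set T := max 1 ((2*|c| + 1 - g xs)/e) with hT
      have hT1 : (1:ℝ) ≤ T := le_max_left _ _
      have hT0 : (0:ℝ) ≤ T := by linarith
      have hTe : 2*|c| + 1 - g xs ≤ T*e := by
        rw [← div_le_iff₀ hvB]; exact le_max_right _ _
      set φ : ℝ → ℝ := fun t => g xs + (2*t*c + t^2*e) with hφ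
      have hφcont : ContinuousOn φ (Set.Icc 0 T) := by fun_prop
      have hφ0 : φ 0 ≤ 0 := by simp [hφ]; linarith
      have hφT : 0 ≤ φ T := by
        have h2 : -(T*|c|) ≤ T*c := by nlinarith [neg_abs_le c]
        simp only [hφ]
        nlinarith [mul_le_mul_of_nonneg_left hTe hT0]
      have hmem : (0:ℝ) ∈ Set.Icc (φ 0) (φ T) := ⟨hφ0, hφT⟩
      obtain ⟨t, _, hφt⟩ := intermediate_value_Icc hT0 hφcont hmem
      refine ⟨xs + t • v, ?_, ?_⟩
      · rw [hgexp]
        simpa [hφ] using hφt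
      · intro x hx
        have hqy : q (xs + t • v) = q xs := by
          rw [hqexp, (key v).1, hvA0]; ring
        rw [hqy]; exact hopt x hx
    · -- A positive definite : xs must equal the unconstrained minimizer, contradiction
      exfalso
      have hdet : IsUnit A.det := isUnit_iff_ne_zero.mpr hpd.det_pos.ne'
      have hAxs : A *ᵥ xs = -a := by
        have := stat; linear_combination (norm := module) this
      have hxs : xs = -(A⁻¹.mulVec a) := by
        have h1 : A⁻¹ *ᵥ (A *ᵥ xs) = xs := by
          rw [Matrix.mulVec_mulVec, Matrix.nonsing_inv_mul _ hdet, Matrix.one_mulVec]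
        rw [← h1, hAxs, Matrix.mulVec_neg]
      rw [← hxs] at hge
      linarith
  · rintro ⟨hpd, hneg⟩ ⟨y, hy0, hyopt⟩
    have hdet : IsUnit A.det := isUnit_iff_ne_zero.mpr hpd.det_pos.ne'
    set xh := -(A⁻¹.mulVec a) with hxh
    have hAxh : A *ᵥ xh = -a := by
      rw [hxh, Matrix.mulVec_neg, Matrix.mulVec_mulVec, Matrix.mul_nonsing_inv _ hdet,
        Matrix.one_mulVec]
    have hyne : y - xh ≠ 0 := by
      intro h
      have : y = xh := by linear_combination (norm := module) h
      rw [this] at hy0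
      linarith
    have hdiff : q y = q xh + (y - xh) ⬝ᵥ A *ᵥ (y - xh) := by
      have h1 := hqexp xh (y - xh) 1
      have h2 : xh + (1:ℝ) • (y - xh) = y := by module
      rw [h2] at h1
      rw [h1, hAxh, dotProduct_neg]
      ring
    have hpos : 0 < (y - xh) ⬝ᵥ A *ᵥ (y - xh) := by simpa using hpd.dotProduct_mulVec_pos hyne
    have := hyopt xh hneg.le
    linarith
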